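/- Let q₀ be a prime power and let 𝔽_{q₀} ⊆ 𝔽_{q₀²} be the quadratic extension of finite fields. The natural action of SL₂(𝔽_{q₀}) on the projective line ℙ¹(𝔽_{q₀²}) (by Möbius transformations on homogeneous coordinates) has exactly two orbits: ℙ¹(𝔽_{q₀}), of cardinality q₀ + 1, and its complement ℙ¹(𝔽_{q₀²}) ∖ ℙ¹(𝔽_{q₀}), of cardinality q₀² − q₀. -/

import Mathlib

open scoped LinearAlgebra.Projectivization

/-- The action of `GL₂(K)` on the projective line `ℙ¹(K) = ℙ K (Fin 2 → K)`,
by Möbius transformations on homogeneous coordinates. -/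
noncomputable def glAct {K : Type*} [Field K] (g : Matrix.GeneralLinearGroup (Fin 2) K)
    (x : ℙ K (Fin 2 → K)) : ℙ K (Fin 2 → K) :=
  Projectivization.map
    ((Matrix.GeneralLinearGroup.toLin g).toLinearEquiv :
      (Fin 2 → K) →ₗ[K] (Fin 2 → K))
    (Matrix.GeneralLinearGroup.toLin g).toLinearEquiv.injective x

/-- The action of `SL₂(F)` on `ℙ¹(K)` for a field extension `K/F`. -/
noncomputable def slAct {F K : Type*} [Field F] [Field K] [Algebra F K]
    (g : Matrix.SpecialLinearGroup (Fin 2) F) (x : ℙ K (Fin 2 → K)) :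
    ℙ K (Fin 2 → K) :=
  glAct (Matrix.SpecialLinearGroup.toGL
    (Matrix.SpecialLinearGroup.map (algebraMap F K) g)) x

/-- The image of `ℙ¹(F)` inside `ℙ¹(K)`: the points admitting a homogeneous
representative with all coordinates in (the image of) `F`. -/
def ratPoints (F K : Type*) [Field F] [Field K] [Algebra F K] :
    Set (ℙ K (Fin 2 → K)) :=
  {x | ∃ (v : Fin 2 → K) (hv : v ≠ 0), Projectivization.mk K v hv = x ∧
    ∀ i, v i ∈ (algebraMap F K).range}

set_option linter.unusedSectionVars false
open Projectivization Matrix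

namespace Aux
variable {F K : Type*} [Field F] [Field K] [Algebra F K]

lemma vne (z : K) : (![z, 1] : Fin 2 → K) ≠ 0 := fun h => one_ne_zero (congrFun h 1)
lemma vinf_ne (K : Type*) [Field K] : (![1, 0] : Fin 2 → K) ≠ 0 :=
  fun h => one_ne_zero (congrFun h 0)

noncomputable def pt (K : Type*) [Field K] (z : K) : ℙ K (Fin 2 → K) :=
  Projectivization.mk K ![z, 1] (vne z)

noncomputable def inf (K : Type*) [Field K] : ℙ K (Fin 2 → K) :=
  Projectivization.mk K ![1, 0] (vinf_ne K)

lemma pt_injective : Function.Injective (pt K) := by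
  intro z w h
  rw [pt, pt, Projectivization.mk_eq_mk_iff'] at h
  obtain ⟨a, ha⟩ := h
  have h1 := congrFun ha 1
  have h0 := congrFun ha 0
  simp at h1 h0
  rw [h1] at h0; simpa using h0.symm

lemma pt_ne_inf (z : K) : pt K z ≠ inf K := by
  rw [pt, inf, Ne, Projectivization.mk_eq_mk_iff']
  rintro ⟨a, ha⟩
  have h1 := congrFun ha 1
  simp at h1

lemma classify (x : ℙ K (Fin 2 → K)) : x = inf K ∨ ∃ z : K, x = pt K z := by
  induction x using Projectivization.ind with
  | h v hv =>
    by_cases h1 : v 1 = 0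
    · left
      have h0 : v 0 ≠ 0 := by
        intro h0; apply hv; funext i; fin_cases i <;> simp [h0, h1]
      rw [inf, Projectivization.mk_eq_mk_iff']
      exact ⟨v 0, by funext i; fin_cases i <;> simp [h1]⟩
    · right
      refine ⟨v 0 / v 1, ?_⟩
      rw [pt, Projectivization.mk_eq_mk_iff']
      exact ⟨v 1, by funext i; fin_cases i <;> simp [h1, mul_div_cancel₀, mul_comm]⟩

lemma mem_ratPoints {x : ℙ K (Fin 2 → K)} :
    x ∈ ratPoints F K ↔ x = inf K ∨ ∃ c : F, x = pt K (algebraMap F K c) := by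
  constructor
  · rintro ⟨v, hv, rfl, hcoord⟩
    rcases classify (Projectivization.mk K v hv) with h | ⟨z, h⟩
    · exact Or.inl h
    · right
      have h' := h
      rw [pt, Projectivization.mk_eq_mk_iff] at h'
      obtain ⟨a, ha⟩ := h'
      have h1 : (a : K) = v 1 := by simpa [Units.smul_def] using congrFun ha 1
      have h0 : (a : K) * z = v 0 := by simpa [Units.smul_def] using congrFun ha 0
      obtain ⟨c1, hc1⟩ := hcoord 1
      obtain ⟨c0, hc0⟩ := hcoord 0
      have ha0 : (a : K) ≠ 0 := a.ne_zero
      have hz : algebraMap F K (c0 / c1) = z := by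
        rw [map_div₀, hc0, hc1, ← h1, ← h0, mul_div_cancel_left₀ z ha0]
      exact ⟨c0 / c1, by rw [hz]; exact h⟩
  · rintro (rfl | ⟨c, rfl⟩)
    · exact ⟨![1, 0], vinf_ne K, rfl, by
        intro i; fin_cases i
        · exact ⟨1, map_one _⟩
        · exact ⟨0, map_zero _⟩⟩
    · exact ⟨![algebraMap F K c, 1], vne _, rfl, by
        intro i; fin_cases i
        · exact ⟨c, rfl⟩
        · exact ⟨1, map_one _⟩⟩

end Aux

section Act
open Projectivization Matrix
namespace Aux
variable {F K : Type*} [Field F] [Field K] [Algebra F K]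

lemma mk_congr {v w : Fin 2 → K} (hv : v ≠ 0) (h : v = w) :
    Projectivization.mk K v hv = Projectivization.mk K w (h ▸ hv) := by subst h; rfl

lemma map_mulVec_ne (g : Matrix.SpecialLinearGroup (Fin 2) F) {v : Fin 2 → K} (hv : v ≠ 0) :
    (g.1.map (algebraMap F K)) *ᵥ v ≠ 0 := by
  intro h
  set G := Matrix.SpecialLinearGroup.map (algebraMap F K) g with hG
  have hcoe : (G : Matrix (Fin 2) (Fin 2) K) = g.1.map (algebraMap F K) := rfl
  have h2 : (G⁻¹ : Matrix.SpecialLinearGroup (Fin 2) K).1 *ᵥ ((G : Matrix (Fin 2) (Fin 2) K) *ᵥ v) = v := by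
    rw [Matrix.mulVec_mulVec, ← Matrix.SpecialLinearGroup.coe_mul, inv_mul_cancel,
      Matrix.SpecialLinearGroup.coe_one, Matrix.one_mulVec]
  rw [hcoe, h, Matrix.mulVec_zero] at h2
  exact hv h2.symm

lemma slAct_mk (g : Matrix.SpecialLinearGroup (Fin 2) F) (v : Fin 2 → K) (hv : v ≠ 0) :
    slAct g (Projectivization.mk K v hv) =
      Projectivization.mk K ((g.1.map (algebraMap F K)) *ᵥ v) (map_mulVec_ne g hv) := rfl

lemma mulVec_pair (M : Matrix (Fin 2) (Fin 2) K) (x y : K) :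
    M *ᵥ ![x, y] = ![M 0 0 * x + M 0 1 * y, M 1 0 * x + M 1 1 * y] := by
  funext i; fin_cases i <;> simp [Matrix.mulVec, dotProduct, Fin.sum_univ_two]

lemma slAct_one (x : ℙ K (Fin 2 → K)) : slAct (1 : Matrix.SpecialLinearGroup (Fin 2) F) x = x := by
  induction x using Projectivization.ind with
  | h v hv =>
    rw [slAct_mk]
    exact mk_congr _ (by
      rw [Matrix.SpecialLinearGroup.coe_one, Matrix.map_one _ (map_zero _) (map_one _),
        Matrix.one_mulVec])

lemma slAct_mul (g h : Matrix.SpecialLinearGroup (Fin 2) F) (x : ℙ K (Fin 2 → K)) :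
    slAct (g * h) x = slAct g (slAct h x) := by
  induction x using Projectivization.ind with
  | h v hv =>
    rw [slAct_mk, slAct_mk, slAct_mk]
    exact mk_congr _ (by
      rw [Matrix.mulVec_mulVec, Matrix.SpecialLinearGroup.coe_mul, Matrix.map_mul])

lemma slAct_inv_cancel (g : Matrix.SpecialLinearGroup (Fin 2) F) (x : ℙ K (Fin 2 → K)) :
    slAct g (slAct g⁻¹ x) = x := by
  rw [← slAct_mul, mul_inv_cancel, slAct_one]

lemma ratPoints_invariant (g : Matrix.SpecialLinearGroup (Fin 2) F) (x : ℙ K (Fin 2 → K))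
    (hx : x ∈ ratPoints F K) : slAct g x ∈ ratPoints F K := by
  obtain ⟨v, hv, rfl, hc⟩ := hx
  refine ⟨_, map_mulVec_ne g hv, (slAct_mk g v hv).symm, fun i => ?_⟩
  have h2 : ((g.1.map (algebraMap F K)) *ᵥ v) i
      = algebraMap F K (g.1 i 0) * v 0 + algebraMap F K (g.1 i 1) * v 1 := by
    simp [Matrix.mulVec, dotProduct, Fin.sum_univ_two, Matrix.map_apply]
  rw [h2]
  exact add_mem (mul_mem ⟨_, rfl⟩ (hc 0)) (mul_mem ⟨_, rfl⟩ (hc 1))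

end Aux
end Act

section Rat
open Projectivization Matrix
namespace Aux
variable {F K : Type*} [Field F] [Field K] [Algebra F K]

lemma slAct_inv_cancel' (g : Matrix.SpecialLinearGroup (Fin 2) F) (x : ℙ K (Fin 2 → K)) :
    slAct g⁻¹ (slAct g x) = x := by
  rw [← slAct_mul, inv_mul_cancel, slAct_one]

lemma trans_inf {x : ℙ K (Fin 2 → K)} (hx : x ∈ ratPoints F K) :
    ∃ g : Matrix.SpecialLinearGroup (Fin 2) F, slAct g (inf K) = x := by
  rcases mem_ratPoints.1 hx with rfl | ⟨c, rfl⟩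
  · exact ⟨1, slAct_one _⟩
  · refine ⟨⟨!![c, -1; 1, 0], by simp [Matrix.det_fin_two_of]⟩, ?_⟩
    rw [inf, pt]
    refine (slAct_mk (F := F) _ _ _).trans ?_
    refine mk_congr _ ?_
    rw [mulVec_pair]
    funext i; fin_cases i <;> simp [Matrix.map_apply]

lemma trans_rat {x y : ℙ K (Fin 2 → K)} (hx : x ∈ ratPoints F K) (hy : y ∈ ratPoints F K) :
    ∃ g : Matrix.SpecialLinearGroup (Fin 2) F, slAct g x = y := by
  obtain ⟨gx, hgx⟩ := trans_inf hx
  obtain ⟨gy, hgy⟩ := trans_inf hy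
  refine ⟨gy * gx⁻¹, ?_⟩
  rw [slAct_mul, ← hgx, slAct_inv_cancel', hgy]

end Aux
end Rat

section FF
open Polynomial
namespace Aux
variable {q₀ : ℕ} {F K : Type*} [Field F] [Field K] [Algebra F K] [Fintype F] [Fintype K]

lemma one_lt_q (hF : Fintype.card F = q₀) : 1 < q₀ := hF ▸ Fintype.one_lt_card

lemma frob_add (hF : Fintype.card F = q₀) (x y : K) : (x + y) ^ q₀ = x ^ q₀ + y ^ q₀ := by
  set p := ringChar F with hp
  haveI : Fact p.Prime := ⟨CharP.char_is_prime F p⟩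
  obtain ⟨n, -, hcard⟩ := FiniteField.card F p
  haveI : CharP K p := charP_of_injective_algebraMap (algebraMap F K).injective p
  rw [← hF, hcard]
  exact add_pow_char_pow x y p n

lemma range_fixed (hF : Fintype.card F = q₀) (c : F) :
    (algebraMap F K c) ^ q₀ = algebraMap F K c := by
  rw [← map_pow, ← hF, FiniteField.pow_card]

lemma mem_range_iff (hF : Fintype.card F = q₀) {x : K} :
    x ∈ (algebraMap F K).range ↔ x ^ q₀ = x := by
  classical
  constructor
  · rintro ⟨c, rfl⟩; exact range_fixed hF c
  · intro hx
    have hq : 1 < q₀ := one_lt_q hF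
    set T : Finset K := Finset.univ.filter (fun x => x ^ q₀ = x) with hT
    set R : Finset K := Finset.univ.image (algebraMap F K) with hR
    have hRT : R ⊆ T := by
      intro y hy
      simp only [hR, Finset.mem_image] at hy
      obtain ⟨c, -, rfl⟩ := hy
      simp [hT, range_fixed hF c]
    have hTcard : T.card ≤ q₀ := by
      have h1 : T ⊆ (X ^ q₀ - X : K[X]).roots.toFinset := by
        intro y hy
        simp only [hT, Finset.mem_filter] at hy
        rw [Multiset.mem_toFinset,
          Polynomial.mem_roots (FiniteField.X_pow_card_sub_X_ne_zero K hq)]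
        simp [Polynomial.IsRoot, hy.2, sub_eq_zero]
      calc T.card ≤ _ := Finset.card_le_card h1
        _ ≤ _ := Multiset.toFinset_card_le _
        _ ≤ (X ^ q₀ - X : K[X]).natDegree := Polynomial.card_roots' _
        _ = q₀ := FiniteField.X_pow_card_sub_X_natDegree_eq K hq
    have hRcard : R.card = q₀ := by
      rw [hR, Finset.card_image_of_injective _ (algebraMap F K).injective,
        Finset.card_univ, hF]
    have heq : R = T := Finset.eq_of_subset_of_card_le hRT (by omega)
    have hxT : x ∈ T := by simp [hT, hx]
    rw [← heq] at hxT
    simp only [hR, Finset.mem_image] at hxT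
    obtain ⟨c, -, rfl⟩ := hxT
    exact ⟨c, rfl⟩

lemma unit_pow_sub_one {u : Kˣ} (hq : 1 < q₀) (h : (u : K) ^ q₀ = u) : u ^ (q₀ - 1) = 1 := by
  have h2 : (u : K) ^ (q₀ - 1) * u = u := by
    rw [← pow_succ]
    have h3 : q₀ - 1 + 1 = q₀ := by omega
    rw [h3, h]
  have h4 : (u : K) ^ (q₀ - 1) = 1 := by
    have := mul_right_cancel₀ u.ne_zero (h2.trans (one_mul (u : K)).symm)
    exact this
  exact Units.ext (by rw [Units.val_pow_eq_pow_val, h4, Units.val_one])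

lemma pow_surj (hF : Fintype.card F = q₀) (hK : Fintype.card K = q₀ ^ 2)
    {β : K} (hβ : β ≠ 0) (hfix : β ^ q₀ = β) : ∃ y : K, y ^ (q₀ + 1) = β := by
  classical
  have hq : 1 < q₀ := one_lt_q hF
  obtain ⟨m, rfl⟩ : ∃ m, q₀ = m + 1 := ⟨q₀ - 1, by omega⟩
  set φ : Kˣ →* Kˣ := powMonoidHom ((m+1) + 1) with hφ
  have hker : Nat.card φ.ker ≤ (m+1) + 1 := by
    have he : Nat.card φ.ker
        = (Finset.univ.filter (fun u : Kˣ => u ^ ((m+1) + 1) = 1)).card := by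
      rw [Nat.card_eq_fintype_card]
      refine Fintype.card_of_subtype _ fun u => ?_
      simp [MonoidHom.mem_ker, hφ, powMonoidHom_apply]
    rw [he]; exact IsCyclic.card_pow_eq_one_le (by omega)
  have hcardU : Nat.card Kˣ = (m+1) ^ 2 - 1 := by
    rw [Nat.card_eq_fintype_card, Fintype.card_units, hK]
  have hlag : Nat.card φ.range * Nat.card φ.ker = (m+1) ^ 2 - 1 := by
    rw [← hcardU, Subgroup.card_eq_card_quotient_mul_card_subgroup φ.ker]
    congr 1
    exact Nat.card_congr (QuotientGroup.quotientKerEquivRange φ).toEquiv.symm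
  have hq2 : (m+1) ^ 2 - 1 = m * (m + 2) := by
    have : (m + 1) ^ 2 = m * (m + 2) + 1 := by ring
    omega
  have hrange_ge : m ≤ Nat.card φ.range := by
    have h1 : m * (m + 2) ≤ Nat.card φ.range * (m + 2) := by
      calc m * (m + 2) = Nat.card φ.range * Nat.card φ.ker := by rw [hlag, hq2]
        _ ≤ Nat.card φ.range * (m + 2) := Nat.mul_le_mul_left _ (by omega)
    exact Nat.le_of_mul_le_mul_right h1 (by omega)
  set B : Finset Kˣ := Finset.univ.filter (fun u : Kˣ => u ^ ((m+1) - 1) = 1) with hB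
  have hBcard : B.card ≤ (m+1) - 1 := IsCyclic.card_pow_eq_one_le (by omega)
  set Rg : Finset Kˣ := Finset.univ.filter (fun u => u ∈ φ.range) with hRg
  have hRgcard : Rg.card = Nat.card φ.range := by
    rw [Nat.card_eq_fintype_card]
    exact (Fintype.card_of_subtype _ fun u => by simp [hRg]).symm
  have hRgB : Rg ⊆ B := by
    intro u hu
    simp only [hRg, Finset.mem_filter, Finset.mem_univ, true_and] at hu
    obtain ⟨w, rfl⟩ := hu
    have hw : (w : K) ^ ((m+1) ^ 2) = w := by rw [← hK, FiniteField.pow_card]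
    have hcoe : ((φ w : Kˣ) : K) ^ (m+1) = ((φ w : Kˣ) : K) := by
      show (((w ^ ((m+1) + 1) : Kˣ) : K)) ^ (m+1) = ((w ^ ((m+1) + 1) : Kˣ) : K)
      rw [Units.val_pow_eq_pow_val]
      calc ((w : K) ^ ((m+1) + 1)) ^ (m+1) = (w : K) ^ ((m+1) ^ 2) * (w : K) ^ (m+1) := by
            rw [← pow_mul, ← pow_add]; ring_nf
        _ = (w : K) * (w : K) ^ (m+1) := by rw [hw]
        _ = (w : K) ^ ((m+1) + 1) := by rw [← pow_succ']
    simp only [hB, Finset.mem_filter, Finset.mem_univ, true_and]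
    exact unit_pow_sub_one hq hcoe
  have hBR : B = Rg :=
    (Finset.eq_of_subset_of_card_le hRgB (by omega)).symm
  set bu : Kˣ := Units.mk0 β hβ with hbu
  have hbuB : bu ∈ B := by
    simp only [hB, Finset.mem_filter, Finset.mem_univ, true_and]
    exact unit_pow_sub_one hq (by rw [hbu, Units.val_mk0]; exact hfix)
  rw [hBR] at hbuB
  simp only [hRg, Finset.mem_filter, Finset.mem_univ, true_and] at hbuB
  obtain ⟨w, hwu⟩ := hbuB
  refine ⟨(w : K), ?_⟩
  have : ((φ w : Kˣ) : K) = β := by rw [hwu, hbu, Units.val_mk0]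
  rw [← this]
  show (w : K) ^ ((m+1) + 1) = ((w ^ ((m+1) + 1) : Kˣ) : K)
  rw [Units.val_pow_eq_pow_val]

end Aux
end FF

section Quad
open Projectivization Matrix
namespace Aux
variable {q₀ : ℕ} {F K : Type*} [Field F] [Field K] [Algebra F K] [Fintype F] [Fintype K]

lemma finrank_two (hF : Fintype.card F = q₀) (hK : Fintype.card K = q₀ ^ 2) :
    Module.finrank F K = 2 := by
  have h := Module.card_eq_pow_finrank (K := F) (V := K)
  rw [hF, hK] at h
  exact (Nat.pow_right_injective (one_lt_q hF) h.symm)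

lemma span_two (hF : Fintype.card F = q₀) (hK : Fintype.card K = q₀ ^ 2)
    {z : K} (hz : z ∉ (algebraMap F K).range) (x : K) :
    ∃ a b : F, x = algebraMap F K a * z + algebraMap F K b := by
  have hli : LinearIndependent F ![z, (1 : K)] := by
    rw [linearIndependent_fin2]
    refine ⟨by simp, fun a ha => hz ?_⟩
    simp only [Matrix.cons_val_one, Matrix.head_cons, Matrix.cons_val_zero] at ha
    exact ⟨a, by rw [← ha, Algebra.smul_def, mul_one]⟩
  have hB := basisOfLinearIndependentOfCardEqFinrank hli
    (by rw [Fintype.card_fin, finrank_two hF hK])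
  set B := basisOfLinearIndependentOfCardEqFinrank hli
    (by rw [Fintype.card_fin, finrank_two hF hK]) with hBdef
  have hsum := B.sum_repr x
  rw [Fin.sum_univ_two] at hsum
  refine ⟨B.repr x 0, B.repr x 1, ?_⟩
  have h0 : B 0 = z := by rw [hBdef, coe_basisOfLinearIndependentOfCardEqFinrank]; simp
  have h1 : B 1 = 1 := by rw [hBdef, coe_basisOfLinearIndependentOfCardEqFinrank]; simp
  rw [h0, h1] at hsum
  rw [Algebra.smul_def, Algebra.smul_def, mul_one] at hsum
  exact hsum.symm

variable (F) in
/-- the minimal polynomial data: z^2 = t z + n -/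
lemma quad_coeff (hF : Fintype.card F = q₀) (hK : Fintype.card K = q₀ ^ 2)
    {z : K} (hz : z ∉ (algebraMap F K).range) :
    ∃ t n : F, z ^ 2 = algebraMap F K t * z + algebraMap F K n := by
  obtain ⟨t, n, h⟩ := span_two hF hK hz (z ^ 2)
  exact ⟨t, n, h⟩

lemma quad_root {z u : K} {t n : F}
    (hz2 : z ^ 2 = algebraMap F K t * z + algebraMap F K n)
    (hu : u ^ 2 = algebraMap F K t * u + algebraMap F K n) :
    u = z ∨ u = algebraMap F K t - z := by
  have hfac : (u - z) * (u - (algebraMap F K t - z)) = 0 := by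
    linear_combination hu - hz2
  rcases mul_eq_zero.1 hfac with h | h
  · left; exact sub_eq_zero.1 h
  · right; exact sub_eq_zero.1 h

end Aux
end Quad

section NonRat
open Projectivization Matrix
namespace Aux
variable {q₀ : ℕ} {F K : Type*} [Field F] [Field K] [Algebra F K] [Fintype F] [Fintype K]

lemma z_pow_card (hF : Fintype.card F = q₀) {z : K} (hz : z ∉ (algebraMap F K).range)
    {t n : F} (hz2 : z ^ 2 = algebraMap F K t * z + algebraMap F K n) :
    z ^ q₀ = algebraMap F K t - z := by
  have hu : (z ^ q₀) ^ 2 = algebraMap F K t * z ^ q₀ + algebraMap F K n := by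
    have h1 : (z ^ q₀) ^ 2 = (z ^ 2) ^ q₀ := by rw [← pow_mul, ← pow_mul, mul_comm]
    rw [h1, hz2, frob_add hF, mul_pow, range_fixed hF, range_fixed hF]
  rcases quad_root hz2 hu with h | h
  · exact absurd ((mem_range_iff hF).2 h) hz
  · exact h

lemma norm_eq (hF : Fintype.card F = q₀) {z : K}
    {t n : F} (hz2 : z ^ 2 = algebraMap F K t * z + algebraMap F K n)
    (hzq : z ^ q₀ = algebraMap F K t - z) (c d : F) :
    (algebraMap F K c * z + algebraMap F K d) ^ (q₀ + 1)
      = algebraMap F K (d ^ 2 + t * c * d - n * c ^ 2) := by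
  have hy : (algebraMap F K c * z + algebraMap F K d) ^ q₀
      = algebraMap F K c * (algebraMap F K t - z) + algebraMap F K d := by
    rw [frob_add hF, mul_pow, range_fixed hF, range_fixed hF, hzq]
  rw [pow_succ, hy]
  simp only [map_add, map_sub, _root_.map_mul, map_pow]
  linear_combination (-(algebraMap F K c) ^ 2) * hz2

lemma pt_mem_iff {w : K} : pt K w ∈ ratPoints F K ↔ w ∈ (algebraMap F K).range := by
  rw [mem_ratPoints]
  constructor
  · rintro (h | ⟨c, h⟩)
    · exact absurd h (pt_ne_inf w)
    · exact ⟨c, (pt_injective h).symm⟩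
  · rintro ⟨c, rfl⟩
    exact Or.inr ⟨c, rfl⟩

lemma nonrat_rep {x : ℙ K (Fin 2 → K)} (hx : x ∉ ratPoints F K) :
    ∃ z : K, z ∉ (algebraMap F K).range ∧ x = pt K z := by
  rcases classify x with rfl | ⟨z, rfl⟩
  · exact absurd (mem_ratPoints.2 (Or.inl rfl)) hx
  · exact ⟨z, fun h => hx (pt_mem_iff.2 h), rfl⟩

lemma trans_nonrat (hF : Fintype.card F = q₀) (hK : Fintype.card K = q₀ ^ 2)
    {x y : ℙ K (Fin 2 → K)} (hx : x ∉ ratPoints F K) (hy : y ∉ ratPoints F K) :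
    ∃ g : Matrix.SpecialLinearGroup (Fin 2) F, slAct g x = y := by
  obtain ⟨z, hz, rfl⟩ := nonrat_rep hx
  obtain ⟨w, hw, rfl⟩ := nonrat_rep hy
  obtain ⟨t, n, hz2⟩ := quad_coeff F hF hK hz
  have hzq := z_pow_card hF hz hz2
  obtain ⟨α, β, hwz⟩ := span_two hF hK hz w
  have hα : α ≠ 0 := by
    rintro rfl
    simp only [map_zero, zero_mul, zero_add] at hwz
    exact hw ⟨β, hwz.symm⟩
  have hαinv_ne : algebraMap F K α⁻¹ ≠ 0 := by
    simpa using inv_ne_zero hα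
  obtain ⟨y0, hy0⟩ := pow_surj hF hK hαinv_ne (range_fixed hF α⁻¹)
  have hy0ne : y0 ≠ 0 := by
    intro h
    rw [h, zero_pow (Nat.succ_ne_zero q₀)] at hy0
    exact hαinv_ne hy0.symm
  obtain ⟨c, d, hy0cd⟩ := span_two hF hK hz y0
  have hQ : d ^ 2 + t * c * d - n * c ^ 2 = α⁻¹ := by
    apply (algebraMap F K).injective
    rw [← norm_eq hF hz2 hzq c d, ← hy0cd, hy0]
  set a := α * c * t + α * d + β * c with ha
  set b := α * c * n + β * d with hb
  have hdet : a * d - b * c = 1 := by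
    have h1 : a * d - b * c = α * (d ^ 2 + t * c * d - n * c ^ 2) := by
      rw [ha, hb]; ring
    rw [h1, hQ, mul_inv_cancel₀ hα]
  refine ⟨⟨!![a, b; c, d], by rw [Matrix.det_fin_two_of]; exact hdet⟩, ?_⟩
  rw [pt]
  refine (slAct_mk (F := F) _ _ _).trans ?_
  have hM : ((!![a, b; c, d]).map (algebraMap F K)) *ᵥ ![z, 1]
      = ![algebraMap F K a * z + algebraMap F K b,
          algebraMap F K c * z + algebraMap F K d] := by
    rw [mulVec_pair]
    funext i; fin_cases i <;> simp [Matrix.map_apply]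
  refine (mk_congr _ hM).trans ?_
  rw [pt, Projectivization.mk_eq_mk_iff']
  refine ⟨y0, ?_⟩
  funext i; fin_cases i
  · show y0 * w = algebraMap F K a * z + algebraMap F K b
    rw [hwz, hy0cd, ha, hb]
    simp only [map_add, _root_.map_mul, map_pow]
    linear_combination (algebraMap F K α * algebraMap F K c) * hz2
  · show y0 * 1 = algebraMap F K c * z + algebraMap F K d
    rw [mul_one]; exact hy0cd

end Aux
end NonRat

section Card
open Projectivization
namespace Aux
variable {q₀ : ℕ} {F K : Type*} [Field F] [Field K] [Algebra F K] [Fintype F] [Fintype K]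

lemma rat_eq :
    ratPoints F K = insert (inf K) (pt K '' Set.range (algebraMap F K)) := by
  ext x
  rw [mem_ratPoints, Set.mem_insert_iff]
  constructor
  · rintro (h | ⟨c, h⟩)
    · exact Or.inl h
    · exact Or.inr ⟨algebraMap F K c, ⟨c, rfl⟩, h.symm⟩
  · rintro (h | ⟨z, ⟨c, rfl⟩, h⟩)
    · exact Or.inl h
    · exact Or.inr ⟨c, h.symm⟩

lemma compl_eq :
    (ratPoints F K)ᶜ = pt K '' (Set.range (algebraMap F K))ᶜ := by
  ext x
  simp only [Set.mem_compl_iff, Set.mem_image]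
  constructor
  · intro hx
    obtain ⟨z, hz, rfl⟩ := nonrat_rep hx
    exact ⟨z, fun h => hz h, rfl⟩
  · rintro ⟨z, hz, rfl⟩ h
    exact hz (pt_mem_iff.1 h)

lemma card_range (hF : Fintype.card F = q₀) :
    (Set.range (algebraMap F K)).ncard = q₀ := by
  rw [← Set.image_univ, Set.ncard_image_of_injective _ (algebraMap F K).injective,
    Set.ncard_univ, Nat.card_eq_fintype_card, hF]

lemma card_rat (hF : Fintype.card F = q₀) :
    Nat.card (ratPoints F K) = q₀ + 1 := by
  rw [Nat.card_coe_set_eq, rat_eq, Set.ncard_insert_of_notMem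
    (by rintro ⟨z, -, h⟩; exact pt_ne_inf z h),
    Set.ncard_image_of_injective _ pt_injective, card_range hF]

lemma card_nonrat (hF : Fintype.card F = q₀) (hK : Fintype.card K = q₀ ^ 2) :
    Nat.card ((ratPoints F K)ᶜ : Set (ℙ K (Fin 2 → K))) = q₀ ^ 2 - q₀ := by
  rw [Nat.card_coe_set_eq, compl_eq,
    Set.ncard_image_of_injective _ pt_injective]
  have h1 := Set.ncard_add_ncard_compl (Set.range (algebraMap F K))
  rw [card_range hF, Nat.card_eq_fintype_card, hK] at h1
  omega

end Aux
end Card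


theorem stmt_3 (q₀ : ℕ) (F K : Type*) [Field F] [Field K] [Algebra F K]
    [Fintype F] [Fintype K]
    (hF : Fintype.card F = q₀) (hK : Fintype.card K = q₀ ^ 2) :
    (∀ (g : Matrix.SpecialLinearGroup (Fin 2) F) (x : ℙ K (Fin 2 → K)),
        x ∈ ratPoints F K → slAct g x ∈ ratPoints F K) ∧
    (∀ x ∈ ratPoints F K, ∀ y ∈ ratPoints F K,
        ∃ g : Matrix.SpecialLinearGroup (Fin 2) F, slAct g x = y) ∧
    (∀ x ∉ ratPoints F K, ∀ y ∉ ratPoints F K,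
        ∃ g : Matrix.SpecialLinearGroup (Fin 2) F, slAct g x = y) ∧
    Nat.card (ratPoints F K) = q₀ + 1 ∧
    Nat.card ((ratPoints F K)ᶜ : Set (ℙ K (Fin 2 → K))) = q₀ ^ 2 - q₀ :=
  ⟨Aux.ratPoints_invariant, fun _ hx _ hy => Aux.trans_rat hx hy,
    fun _ hx _ hy => Aux.trans_nonrat hF hK hx hy,
    Aux.card_rat hF, Aux.card_nonrat hF hK⟩
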